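/- For the car with a trailer on ℝ⁴ with coordinates (x, y, θ, φ) and vector fields F₁ = cos θ ∂/∂x + sin θ ∂/∂y + ∂/∂φ, F₂ = ∂/∂θ - sin φ ∂/∂φ, the iterated brackets satisfy: F₁, F₂, [F₁, F₂], [F₂, [F₁, F₂]] span ℝ⁴ at every point where cos φ ≠ 0 — more precisely, the Lie algebra generated by F₁ and F₂ spans ℝ⁴ at every point (the system is completely nonholonomic). -/

import Mathlib

/-- Lie bracket of vector fields on ℝⁿ (identified with maps ℝⁿ → ℝⁿ):
[F,G](p) = DG(p)·F(p) - DF(p)·G(p). -/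
noncomputable def vfBracket {n : ℕ} (F G : (Fin n → ℝ) → (Fin n → ℝ)) :
    (Fin n → ℝ) → (Fin n → ℝ) :=
  fun p => fderiv ℝ G p (F p) - fderiv ℝ F p (G p)


noncomputable def D1 (p : Fin 4 → ℝ) : (Fin 4 → ℝ) →L[ℝ] (Fin 4 → ℝ) :=
  ContinuousLinearMap.pi ![(-Real.sin (p 2)) • ContinuousLinearMap.proj 2,
      Real.cos (p 2) • ContinuousLinearMap.proj 2, 0, 0]

noncomputable def D2 (p : Fin 4 → ℝ) : (Fin 4 → ℝ) →L[ℝ] (Fin 4 → ℝ) :=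
  ContinuousLinearMap.pi ![0, 0, 0, (-Real.cos (p 3)) • ContinuousLinearMap.proj 3]

noncomputable def DB (p : Fin 4 → ℝ) : (Fin 4 → ℝ) →L[ℝ] (Fin 4 → ℝ) :=
  ContinuousLinearMap.pi ![Real.cos (p 2) • ContinuousLinearMap.proj 2,
      Real.sin (p 2) • ContinuousLinearMap.proj 2, 0,
      Real.sin (p 3) • ContinuousLinearMap.proj 3]

lemma hD1 (p : Fin 4 → ℝ) :
    HasFDerivAt (fun p : Fin 4 → ℝ => ![Real.cos (p 2), Real.sin (p 2), (0:ℝ), 1]) (D1 p) p := by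
  rw [hasFDerivAt_pi']
  intro i
  fin_cases i <;> simp only [D1, ContinuousLinearMap.proj_pi, Matrix.cons_val_zero,
    Matrix.cons_val_one, Matrix.head_cons, Matrix.cons_val_two, Matrix.tail_cons,
    Matrix.cons_val_three, Fin.isValue]
  · exact (Real.hasDerivAt_cos (p 2)).comp_hasFDerivAt (f := fun x : Fin 4 → ℝ => x 2) p (hasFDerivAt_apply 2 p)
  · exact (Real.hasDerivAt_sin (p 2)).comp_hasFDerivAt (f := fun x : Fin 4 → ℝ => x 2) p (hasFDerivAt_apply 2 p)
  · exact hasFDerivAt_const _ _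
  · exact hasFDerivAt_const _ _

lemma hD2 (p : Fin 4 → ℝ) :
    HasFDerivAt (fun p : Fin 4 → ℝ => ![(0:ℝ), 0, 1, -Real.sin (p 3)]) (D2 p) p := by
  rw [hasFDerivAt_pi']
  intro i
  fin_cases i <;> simp only [D2, ContinuousLinearMap.proj_pi, Matrix.cons_val_zero,
    Matrix.cons_val_one, Matrix.head_cons, Matrix.cons_val_two, Matrix.tail_cons,
    Matrix.cons_val_three, Fin.isValue]
  · exact hasFDerivAt_const _ _
  · exact hasFDerivAt_const _ _
  · exact hasFDerivAt_const _ _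
  · exact ((Real.hasDerivAt_sin (p 3)).neg).comp_hasFDerivAt (f := fun x : Fin 4 → ℝ => x 3) p (hasFDerivAt_apply 3 p)

lemma hDB (p : Fin 4 → ℝ) :
    HasFDerivAt (fun p : Fin 4 → ℝ => ![Real.sin (p 2), -Real.cos (p 2), (0:ℝ), -Real.cos (p 3)])
      (DB p) p := by
  rw [hasFDerivAt_pi']
  intro i
  fin_cases i <;> simp only [DB, ContinuousLinearMap.proj_pi, Matrix.cons_val_zero,
    Matrix.cons_val_one, Matrix.head_cons, Matrix.cons_val_two, Matrix.tail_cons,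
    Matrix.cons_val_three, Fin.isValue]
  · exact (Real.hasDerivAt_sin (p 2)).comp_hasFDerivAt (f := fun x : Fin 4 → ℝ => x 2) p (hasFDerivAt_apply 2 p)
  · have h : HasDerivAt (fun y => -Real.cos y) (Real.sin (p 2)) (p 2) := by
      exact (Real.hasDerivAt_cos (p 2)).neg.congr_deriv (neg_neg _)
    exact h.comp_hasFDerivAt (f := fun x : Fin 4 → ℝ => x 2) p (hasFDerivAt_apply 2 p)
  · exact hasFDerivAt_const _ _
  · have h : HasDerivAt (fun y => -Real.cos y) (Real.sin (p 3)) (p 3) := by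
      exact (Real.hasDerivAt_cos (p 3)).neg.congr_deriv (neg_neg _)
    exact h.comp_hasFDerivAt (f := fun x : Fin 4 → ℝ => x 3) p (hasFDerivAt_apply 3 p)

lemma brk12 : vfBracket (fun p : Fin 4 → ℝ => ![Real.cos (p 2), Real.sin (p 2), (0:ℝ), 1])
    (fun p : Fin 4 → ℝ => ![(0:ℝ), 0, 1, -Real.sin (p 3)]) =
    fun p => ![Real.sin (p 2), -Real.cos (p 2), (0:ℝ), -Real.cos (p 3)] := by
  funext p
  simp only [vfBracket, (hD1 p).fderiv, (hD2 p).fderiv]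
  funext i
  fin_cases i <;> simp [D1, D2]

lemma brk112 : vfBracket (fun p : Fin 4 → ℝ => ![Real.cos (p 2), Real.sin (p 2), (0:ℝ), 1])
    (fun p : Fin 4 → ℝ => ![Real.sin (p 2), -Real.cos (p 2), (0:ℝ), -Real.cos (p 3)]) =
    fun p => ![(0:ℝ), 0, 0, Real.sin (p 3)] := by
  funext p
  simp only [vfBracket, (hD1 p).fderiv, (hDB p).fderiv]
  funext i
  fin_cases i <;> simp [D1, DB]

lemma brk212 : vfBracket (fun p : Fin 4 → ℝ => ![(0:ℝ), 0, 1, -Real.sin (p 3)])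
    (fun p : Fin 4 → ℝ => ![Real.sin (p 2), -Real.cos (p 2), (0:ℝ), -Real.cos (p 3)]) =
    fun p => ![Real.cos (p 2), Real.sin (p 2), (0:ℝ), -1] := by
  funext p
  simp only [vfBracket, (hD2 p).fderiv, (hDB p).fderiv]
  funext i
  fin_cases i <;> simp [D2, DB]
  · ring_nf
    rw [← Real.sin_sq_add_cos_sq (p 3)]
    ring


lemma span_aux (p : Fin 4 → ℝ) (S : Set (Fin 4 → ℝ))
    (h1 : ![Real.cos (p 2), Real.sin (p 2), (0:ℝ), 1] ∈ S)
    (h2 : ![(0:ℝ), 0, 1, -Real.sin (p 3)] ∈ S)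
    (h3 : ![Real.sin (p 2), -Real.cos (p 2), (0:ℝ), -Real.cos (p 3)] ∈ S)
    (h4 : ![Real.cos (p 2), Real.sin (p 2), (0:ℝ), -1] ∈ S) :
    Submodule.span ℝ S = ⊤ := by
  set M := Submodule.span ℝ S with hM
  have m1 := Submodule.subset_span (R := ℝ) h1
  have m2 := Submodule.subset_span (R := ℝ) h2
  have m3 := Submodule.subset_span (R := ℝ) h3
  have m4 := Submodule.subset_span (R := ℝ) h4
  rw [← hM] at m1 m2 m3 m4
  have he3 : ![(0:ℝ), 0, 0, 1] ∈ M := by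
    have h : ![(0:ℝ), 0, 0, 1] =
        (1/2 : ℝ) • ![Real.cos (p 2), Real.sin (p 2), (0:ℝ), 1] + (-(1/2) : ℝ) • ![Real.cos (p 2), Real.sin (p 2), (0:ℝ), -1] := by
      funext i; fin_cases i <;> simp <;> ring
    rw [h]; exact add_mem (M.smul_mem _ m1) (M.smul_mem _ m4)
  have he2 : ![(0:ℝ), 0, 1, 0] ∈ M := by
    have h : ![(0:ℝ), 0, 1, 0] =
        ![(0:ℝ), 0, 1, -Real.sin (p 3)] + Real.sin (p 3) • ![(0:ℝ), 0, 0, 1] := by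
      funext i; fin_cases i <;> simp
    rw [h]; exact add_mem m2 (M.smul_mem _ he3)
  have he0 : ![(1:ℝ), 0, 0, 0] ∈ M := by
    have h : ![(1:ℝ), 0, 0, 0] =
        Real.cos (p 2) • ![Real.cos (p 2), Real.sin (p 2), (0:ℝ), 1] + Real.sin (p 2) • ![Real.sin (p 2), -Real.cos (p 2), (0:ℝ), -Real.cos (p 3)] + (Real.sin (p 2)*Real.cos (p 3) - Real.cos (p 2)) • ![(0:ℝ), 0, 0, 1] := by
      funext i; fin_cases i <;> simp <;>
        first
        | ring1
        | (rw [← Real.sin_sq_add_cos_sq (p 2)]; ring)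
    rw [h]
    exact add_mem (add_mem (M.smul_mem _ m1) (M.smul_mem _ m3)) (M.smul_mem _ he3)
  have he1 : ![(0:ℝ), 1, 0, 0] ∈ M := by
    have h : ![(0:ℝ), 1, 0, 0] =
        Real.sin (p 2) • ![Real.cos (p 2), Real.sin (p 2), (0:ℝ), 1] + (-Real.cos (p 2)) • ![Real.sin (p 2), -Real.cos (p 2), (0:ℝ), -Real.cos (p 3)] + (-(Real.sin (p 2) + Real.cos (p 2)*Real.cos (p 3))) • ![(0:ℝ), 0, 0, 1] := by
      funext i; fin_cases i <;> simp <;>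
        first
        | ring1
        | (rw [← Real.sin_sq_add_cos_sq (p 2)]; ring)
    rw [h]
    exact add_mem (add_mem (M.smul_mem _ m1) (M.smul_mem _ m3)) (M.smul_mem _ he3)
  rw [Submodule.eq_top_iff']
  intro x
  have hx : x = x 0 • ![(1:ℝ), 0, 0, 0] + x 1 • ![(0:ℝ), 1, 0, 0] +
      x 2 • ![(0:ℝ), 0, 1, 0] + x 3 • ![(0:ℝ), 0, 0, 1] := by
    funext i; fin_cases i <;> simp
  rw [hx]
  exact add_mem (add_mem (add_mem (M.smul_mem _ he0) (M.smul_mem _ he1))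
    (M.smul_mem _ he2)) (M.smul_mem _ he3)

/-- For the car with a trailer on ℝ⁴, coordinates
(x,y,θ,φ) = (p 0, p 1, p 2, p 3), with F₁ = cos θ ∂x + sin θ ∂y + ∂φ and
F₂ = ∂θ - sin φ ∂φ: the fields F₁, F₂, [F₁,F₂], [F₂,[F₁,F₂]] span ℝ⁴ at every
point where cos φ ≠ 0; more precisely, the Lie algebra generated by F₁, F₂
(already its iterated brackets up to order 3) spans ℝ⁴ at every point of ℝ⁴:
the system is completely nonholonomic. -/
theorem stmt7 (F₁ F₂ : (Fin 4 → ℝ) → (Fin 4 → ℝ))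
    (hF₁ : F₁ = fun p => ![Real.cos (p 2), Real.sin (p 2), 0, 1])
    (hF₂ : F₂ = fun p => ![0, 0, 1, -Real.sin (p 3)]) :
    (∀ p : Fin 4 → ℝ, Real.cos (p 3) ≠ 0 →
      Submodule.span ℝ
        ({F₁ p, F₂ p, vfBracket F₁ F₂ p, vfBracket F₂ (vfBracket F₁ F₂) p} :
          Set (Fin 4 → ℝ)) = ⊤) ∧
    (∀ p : Fin 4 → ℝ,
      Submodule.span ℝ
        ({F₁ p, F₂ p, vfBracket F₁ F₂ p, vfBracket F₁ (vfBracket F₁ F₂) p,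
          vfBracket F₂ (vfBracket F₁ F₂) p} : Set (Fin 4 → ℝ)) = ⊤) := by
  subst hF₁; subst hF₂
  rw [brk12, brk112, brk212]
  constructor
  · intro p _
    exact span_aux p _ (Set.mem_insert _ _) (by simp) (by simp) (by simp)
  · intro p
    exact span_aux p _ (Set.mem_insert _ _) (by simp) (by simp) (by simp)
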